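/- Let C1, C2, C3 be polynomials in Q[x1, x2] (two commuting variables over the rationals) with x1^2 * C1 + x1 * x2 * C2 + x2^2 * C3 = 0. Then there exist polynomials D1, D3 in Q[x1, x2] with C1 = x2 * D1, C3 = x1 * D3, and C2 = -x1 * D1 - x2 * D3. -/

import Mathlib

open MvPolynomial in
lemma primeX2 (i : Fin 2) : Prime (X i : MvPolynomial (Fin 2) ℚ) := by
  have h0 : Prime (X 0 : MvPolynomial (Fin 2) ℚ) := by
    rw [← MulEquiv.prime_iff (p := X 0) (finSuccEquiv ℚ 1).toMulEquiv]
    have : (finSuccEquiv ℚ 1).toMulEquiv (X 0) = Polynomial.X := finSuccEquiv_X_zero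
    rw [this]
    exact Polynomial.prime_X
  fin_cases i
  · exact h0
  · have := (MulEquiv.prime_iff (p := X 0) (renameEquiv ℚ (Equiv.swap (0 : Fin 2) 1)).toMulEquiv).mpr h0
    simpa using this

open MvPolynomial in
theorem stmt_6 (C1 C2 C3 : MvPolynomial (Fin 2) ℚ)
    (h : (X 0)^2 * C1 + X 0 * X 1 * C2 + (X 1)^2 * C3 = 0) :
    ∃ D1 D3 : MvPolynomial (Fin 2) ℚ,
      C1 = X 1 * D1 ∧ C3 = X 0 * D3 ∧ C2 = -(X 0) * D1 - X 1 * D3 := by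
  have p0 := primeX2 0
  have p1 := primeX2 1
  have hne : ¬ (X 1 : MvPolynomial (Fin 2) ℚ) ∣ X 0 := by
    rw [X_dvd_X]; decide
  have hne' : ¬ (X 0 : MvPolynomial (Fin 2) ℚ) ∣ X 1 := by
    rw [X_dvd_X]; decide
  -- X 1 ∣ X0^2 * C1
  have hd1 : (X 1 : MvPolynomial (Fin 2) ℚ) ∣ C1 := by
    have : (X 1 : MvPolynomial (Fin 2) ℚ) ∣ (X 0)^2 * C1 :=
      ⟨-(X 0 * C2 + X 1 * C3), by linear_combination h⟩
    rcases p1.2.2 _ _ this with h' | h'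
    · rcases p1.2.2 _ _ (by simpa [sq] using h') with h'' | h''
      · exact absurd h'' hne
      · exact absurd h'' hne
    · exact h'
  have hd3 : (X 0 : MvPolynomial (Fin 2) ℚ) ∣ C3 := by
    have : (X 0 : MvPolynomial (Fin 2) ℚ) ∣ (X 1)^2 * C3 :=
      ⟨-(X 0 * C1 + X 1 * C2), by linear_combination h⟩
    rcases p0.2.2 _ _ this with h' | h'
    · rcases p0.2.2 _ _ (by simpa [sq] using h') with h'' | h''
      · exact absurd h'' hne'
      · exact absurd h'' hne'
    · exact h'
  obtain ⟨D1, hD1⟩ := hd1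
  obtain ⟨D3, hD3⟩ := hd3
  refine ⟨D1, D3, hD1, hD3, ?_⟩
  have key : X 0 * X 1 * (C2 - (-(X 0) * D1 - X 1 * D3)) = 0 := by
    rw [hD1, hD3] at h; ring_nf; ring_nf at h; linear_combination h
  have hx : (X 0 * X 1 : MvPolynomial (Fin 2) ℚ) ≠ 0 :=
    mul_ne_zero p0.1 p1.1
  have := mul_eq_zero.mp key
  rcases this with h' | h'
  · exact absurd h' hx
  · linear_combination h'
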